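/- The integral from 0 to 1 of (1 − e^{-t} − e^{-1/t})/t dt equals the Euler–Mascheroni constant γ. -/

import Mathlib

open MeasureTheory Real Set Filter Topology

lemma int1 : IntegrableOn (fun t : ℝ => Real.log t * Real.exp (-t)) (Set.Ioc 0 1) := by
  rw [integrableOn_Ioc_iff_integrableOn_Ioo]
  have hb : IntegrableOn (fun t : ℝ => 2 * t ^ (-(1:ℝ)/2)) (Set.Ioo 0 1) := by
    refine Integrable.const_mul ?_ 2
    exact (intervalIntegral.integrableOn_Ioo_rpow_iff zero_lt_one).mpr (by norm_num)
  refine Integrable.mono hb ?_ ?_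
  · refine (Measurable.aestronglyMeasurable ?_).restrict
    exact (Real.measurable_log.mul (measurable_exp.comp measurable_neg))
  · filter_upwards [ae_restrict_mem measurableSet_Ioo] with t ht
    have h0 : (0:ℝ) < t := ht.1
    have h1 : t < 1 := ht.2
    have hle : -Real.log t ≤ 2 * t ^ (-(1:ℝ)/2) := by
      have hlog : Real.log (t ^ (-(1:ℝ)/2)) ≤ t ^ (-(1:ℝ)/2) :=
        (Real.log_le_sub_one_of_pos (Real.rpow_pos_of_pos h0 _)).trans (by linarith)
      rw [Real.log_rpow h0] at hlog
      linarith
    have hlogneg : Real.log t ≤ 0 := Real.log_nonpos h0.le h1.le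
    have hexp : Real.exp (-t) ≤ 1 := Real.exp_le_one_iff.mpr (by linarith)
    have hrpos : (0:ℝ) ≤ 2 * t ^ (-(1:ℝ)/2) := by positivity
    rw [Real.norm_eq_abs, Real.norm_eq_abs, abs_of_nonneg hrpos, abs_mul,
      abs_of_nonpos hlogneg, abs_of_nonneg (Real.exp_pos _).le]
    calc -Real.log t * Real.exp (-t) ≤ -Real.log t * 1 := by
          apply mul_le_mul_of_nonneg_left hexp (by linarith)
      _ ≤ 2 * t ^ (-(1:ℝ)/2) := by linarith

lemma int2 : IntegrableOn (fun t : ℝ => Real.log t * Real.exp (-t)) (Set.Ioi 1) := by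
  have hb : IntegrableOn (fun t : ℝ => Real.exp (-t) * t ^ ((2:ℝ) - 1)) (Set.Ioi 1) :=
    (Real.GammaIntegral_convergent two_pos).mono_set (Set.Ioi_subset_Ioi zero_le_one)
  refine Integrable.mono hb ?_ ?_
  · refine (Measurable.aestronglyMeasurable ?_).restrict
    exact (Real.measurable_log.mul (measurable_exp.comp measurable_neg))
  · filter_upwards [ae_restrict_mem measurableSet_Ioi] with t ht
    have h1 : (1:ℝ) < t := ht
    have hlog : Real.log t ≤ t := (Real.log_le_sub_one_of_pos (by linarith)).trans (by linarith)
    have hlognn : 0 ≤ Real.log t := Real.log_nonneg h1.le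
    have : t ^ ((2:ℝ)-1) = t := by norm_num
    rw [Real.norm_eq_abs, Real.norm_eq_abs, abs_mul, abs_of_nonneg hlognn,
      abs_of_nonneg (Real.exp_pos _).le, this, abs_of_nonneg (by positivity : (0:ℝ) ≤ rexp (-t) * t)]
    rw [mul_comm (rexp (-t)) t]
    exact mul_le_mul_of_nonneg_right hlog (Real.exp_pos _).le

lemma int3 : IntegrableOn (fun t : ℝ => Real.exp (-t) / t) (Set.Ioi 1) := by
  have hb : IntegrableOn (fun t : ℝ => Real.exp (-t)) (Set.Ioi 1) := by
    simpa using exp_neg_integrableOn_Ioi 1 one_pos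
  refine Integrable.mono hb ?_ ?_
  · refine (Measurable.aestronglyMeasurable ?_).restrict
    exact (measurable_exp.comp measurable_neg).div measurable_id
  · filter_upwards [ae_restrict_mem measurableSet_Ioi] with t ht
    have h1 : (1:ℝ) < t := ht
    rw [Real.norm_eq_abs, Real.norm_eq_abs, abs_of_nonneg (by positivity : (0:ℝ) ≤ rexp (-t)/t),
      abs_of_nonneg (Real.exp_pos _).le]
    rw [div_le_iff₀ (by linarith)]
    nlinarith [Real.exp_pos (-t)]

lemma gamma_eq : ∫ t in Set.Ioi (0:ℝ), Real.log t * Real.exp (-t) = -Real.eulerMascheroniConstant := by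
  set I : ℝ := ∫ t in Set.Ioi (0:ℝ), Real.log t * Real.exp (-t) with hI
  have h1 : HasDerivAt Complex.GammaIntegral
      (∫ t : ℝ in Set.Ioi 0, (t:ℂ) ^ ((1:ℂ) - 1) * (Real.log t * Real.exp (-t))) 1 :=
    Complex.hasDerivAt_GammaIntegral (by simp)
  have h2 : (∫ t : ℝ in Set.Ioi 0, (t:ℂ) ^ ((1:ℂ) - 1) * (Real.log t * Real.exp (-t))) = (I : ℂ) := by
    have e1 : (∫ t : ℝ in Set.Ioi 0, (t:ℂ) ^ ((1:ℂ) - 1) * (Real.log t * Real.exp (-t)))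
        = ∫ t : ℝ in Set.Ioi 0, ((Real.log t * Real.exp (-t) : ℝ) : ℂ) := by
      refine integral_congr_ae (Filter.Eventually.of_forall fun t => ?_)
      push_cast
      rw [sub_self, Complex.cpow_zero, one_mul]
    rw [hI, e1]
    exact integral_ofReal
  rw [h2] at h1
  have h3 : HasDerivAt Complex.Gamma (I : ℂ) 1 := by
    refine h1.congr_of_eventuallyEq ?_
    filter_upwards [IsOpen.mem_nhds (isOpen_lt continuous_const Complex.continuous_re)
      (by norm_num : (0:ℝ) < (1:ℂ).re)] with s hs
    exact Complex.Gamma_eq_integral hs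
  have h4 : HasDerivAt Real.Gamma I 1 := by
    have := h3.real_of_complex
    simp only [Complex.ofReal_re] at this; exact this
  have := h4.unique Real.hasDerivAt_Gamma_one
  linarith

lemma int4 : IntegrableOn (fun t : ℝ => (1 - Real.exp (-t)) / t) (Set.Ioc 0 1) := by
  refine Measure.integrableOn_of_bounded (M := 1) (by simp) ?_ ?_
  · refine Measurable.aestronglyMeasurable ?_
    exact ((measurable_const.sub (measurable_exp.comp measurable_neg)).div measurable_id)
  · filter_upwards [ae_restrict_mem measurableSet_Ioc] with t ht
    have h0 : (0:ℝ) < t := ht.1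
    have key : 1 - Real.exp (-t) ≤ t := by nlinarith [Real.add_one_le_exp (-t)]
    have nn : 0 ≤ 1 - Real.exp (-t) := by
      have : Real.exp (-t) ≤ 1 := Real.exp_le_one_iff.mpr (by linarith)
      linarith
    rw [Real.norm_eq_abs, abs_of_nonneg (by positivity)]
    rw [div_le_one h0]
    exact key

lemma int5 : IntegrableOn (fun t : ℝ => Real.exp (-1/t) / t) (Set.Ioc 0 1) := by
  refine Measure.integrableOn_of_bounded (M := 1) (by simp) ?_ ?_
  · refine Measurable.aestronglyMeasurable ?_
    exact ((measurable_exp.comp ((measurable_const).div measurable_id)).div measurable_id)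
  · filter_upwards [ae_restrict_mem measurableSet_Ioc] with t ht
    have h0 : (0:ℝ) < t := ht.1
    have key : Real.exp (-1/t) ≤ t := by
      have h1 : 1/t ≤ Real.exp (1/t) := by
        have := Real.add_one_le_exp (1/t); linarith
      have h2 : Real.exp (-1/t) = (Real.exp (1/t))⁻¹ := by
        rw [← Real.exp_neg]; ring_nf
      rw [h2]
      rw [inv_le_comm₀ (Real.exp_pos _) h0]
      calc t⁻¹ = 1/t := (one_div t).symm
        _ ≤ Real.exp (1/t) := h1
    rw [Real.norm_eq_abs, abs_of_nonneg (by positivity), div_le_one h0]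
    exact key

lemma expderiv (t : ℝ) : HasDerivAt (fun t : ℝ => 1 - Real.exp (-t)) (Real.exp (-t)) t := by
  have h := (Real.hasDerivAt_exp (-t)).comp t (hasDerivAt_neg t)
  simpa using h.const_sub 1

-- by parts on (0,1)
lemma parts1 : ∫ t in Set.Ioo (0:ℝ) 1, (1 - Real.exp (-t)) / t
    = -∫ t in Set.Ioo (0:ℝ) 1, Real.log t * Real.exp (-t) := by
  have hderiv : ∀ t ∈ Set.Ioo (0:ℝ) 1, HasDerivAt (fun t => (1 - Real.exp (-t)) * Real.log t)
      (Real.exp (-t) * Real.log t + (1 - Real.exp (-t)) / t) t := by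
    intro t ht
    have h2 : HasDerivAt Real.log t⁻¹ t := Real.hasDerivAt_log ht.1.ne'
    have := (expderiv t).mul h2; rw [div_eq_mul_inv]; exact this
  have hint : IntervalIntegrable (fun t => Real.exp (-t) * Real.log t + (1 - Real.exp (-t)) / t)
      volume 0 1 := by
    rw [intervalIntegrable_iff_integrableOn_Ioc_of_le zero_le_one]
    exact ((int1.congr_fun (fun t _ => mul_comm (Real.log t) (Real.exp (-t)))
      measurableSet_Ioc).add int4)
  have hlim0 : Tendsto (fun t => (1 - Real.exp (-t)) * Real.log t) (𝓝[>] (0:ℝ)) (𝓝 0) := by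
    have hslope : Tendsto (fun t : ℝ => (1 - Real.exp (-t)) / t) (𝓝[>] 0) (𝓝 1) := by
      have hD : HasDerivAt (fun t : ℝ => 1 - Real.exp (-t)) 1 0 := by simpa using expderiv 0
      have h := hasDerivAt_iff_tendsto_slope.mp hD
      have h2 := h.mono_left (nhdsWithin_mono 0 (fun x hx => ne_of_gt hx : Set.Ioi 0 ⊆ {(0:ℝ)}ᶜ))
      refine h2.congr' ?_
      filter_upwards [self_mem_nhdsWithin] with t ht
      simp only [slope, vsub_eq_sub, smul_eq_mul, sub_zero, neg_zero, Real.exp_zero, sub_self,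
        sub_zero]
      rw [inv_mul_eq_div]
    have hmullog : Tendsto (fun t : ℝ => t * Real.log t) (𝓝[>] 0) (𝓝 0) := by
      have := (Real.continuous_mul_log.tendsto 0).mono_left
        (nhdsWithin_le_nhds : 𝓝[>] (0:ℝ) ≤ 𝓝 0)
      simpa using this
    have := hslope.mul hmullog
    rw [one_mul] at this
    refine this.congr' ?_
    filter_upwards [self_mem_nhdsWithin] with t ht
    have : (t:ℝ) ≠ 0 := ne_of_gt ht
    field_simp
  have hlim1 : Tendsto (fun t => (1 - Real.exp (-t)) * Real.log t) (𝓝[<] (1:ℝ)) (𝓝 0) := by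
    have hc : ContinuousAt (fun t : ℝ => (1 - Real.exp (-t)) * Real.log t) 1 := by
      exact ((continuous_const.sub (Real.continuous_exp.comp continuous_neg)).continuousAt).mul
        (Real.continuousAt_log one_ne_zero)
    have := hc.tendsto.mono_left (nhdsWithin_le_nhds : 𝓝[<] (1:ℝ) ≤ 𝓝 1)
    simpa using this
  have key := intervalIntegral.integral_eq_sub_of_hasDerivAt_of_tendsto zero_lt_one hderiv hint
    hlim0 hlim1
  rw [sub_zero, intervalIntegral.integral_of_le zero_le_one] at key
  rw [MeasureTheory.integral_add (int1.congr_fun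
    (fun t _ => mul_comm (Real.log t) (Real.exp (-t))) measurableSet_Ioc) int4] at key
  have : ∫ t in Set.Ioc (0:ℝ) 1, Real.exp (-t) * Real.log t
      = ∫ t in Set.Ioc (0:ℝ) 1, Real.log t * Real.exp (-t) :=
    setIntegral_congr_fun measurableSet_Ioc (fun t _ => mul_comm _ _)
  rw [this] at key
  rw [← MeasureTheory.integral_Ioc_eq_integral_Ioo, ← MeasureTheory.integral_Ioc_eq_integral_Ioo]
  linarith

lemma parts2 : ∫ t in Set.Ioi (1:ℝ), Real.exp (-t) / t
    = ∫ t in Set.Ioi (1:ℝ), Real.log t * Real.exp (-t) := by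
  have hderiv : ∀ t ∈ Set.Ioi (1:ℝ), HasDerivAt (fun t => Real.exp (-t) * Real.log t)
      (-(Real.log t * Real.exp (-t)) + Real.exp (-t) / t) t := by
    intro t ht
    have h1 : HasDerivAt (fun t : ℝ => Real.exp (-t)) (-Real.exp (-t)) t := by
      have := (Real.hasDerivAt_exp (-t)).comp t (hasDerivAt_neg t); simp only [mul_neg, mul_one] at this; exact this
    have h2 : HasDerivAt Real.log t⁻¹ t := Real.hasDerivAt_log (lt_trans zero_lt_one ht).ne'
    have := h1.mul h2
    rw [show -(Real.log t * Real.exp (-t)) + Real.exp (-t) / t = -Real.exp (-t) * Real.log t + Real.exp (-t) * t⁻¹ by ring]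
    exact this
  have hint : IntegrableOn (fun t => -(Real.log t * Real.exp (-t)) + Real.exp (-t) / t)
      (Set.Ioi 1) := int2.neg.add int3
  have hcont : ContinuousWithinAt (fun t => Real.exp (-t) * Real.log t) (Set.Ici 1) 1 := by
    exact (((Real.continuous_exp.comp continuous_neg).continuousAt).mul
      (Real.continuousAt_log one_ne_zero)).continuousWithinAt
  have hlim : Tendsto (fun t => Real.exp (-t) * Real.log t) atTop (𝓝 0) := by
    have hbig : Tendsto (fun t : ℝ => t * Real.exp (-t)) atTop (𝓝 0) := by
      simpa using Real.tendsto_pow_mul_exp_neg_atTop_nhds_zero 1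
    refine tendsto_of_tendsto_of_tendsto_of_le_of_le' tendsto_const_nhds hbig ?_ ?_
    · filter_upwards [eventually_ge_atTop (1:ℝ)] with t ht
      have := Real.log_nonneg ht
      positivity
    · filter_upwards [eventually_ge_atTop (1:ℝ)] with t ht
      have hlog : Real.log t ≤ t := (Real.log_le_sub_one_of_pos (by linarith)).trans (by linarith)
      rw [mul_comm]
      exact mul_le_mul_of_nonneg_right hlog (Real.exp_pos _).le
  have key := MeasureTheory.integral_Ioi_of_hasDerivAt_of_tendsto hcont hderiv hint hlim
  simp only [neg_zero, Real.log_one, mul_zero, zero_sub, neg_zero, neg_neg] at key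
  have hsplit : (∫ x in Set.Ioi (1:ℝ), (-(Real.log x * Real.exp (-x)) + Real.exp (-x) / x))
      = (∫ x in Set.Ioi (1:ℝ), -(Real.log x * Real.exp (-x)))
        + ∫ x in Set.Ioi (1:ℝ), Real.exp (-x) / x :=
    MeasureTheory.integral_add int2.neg int3
  rw [hsplit, MeasureTheory.integral_neg] at key
  linarith

lemma subst : ∫ t in Set.Ioo (0:ℝ) 1, Real.exp (-1/t) / t
    = ∫ t in Set.Ioi (1:ℝ), Real.exp (-t) / t := by
  have himg : (fun x : ℝ => x⁻¹) '' Set.Ioi 1 = Set.Ioo 0 1 := by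
    ext y
    constructor
    · rintro ⟨x, hx, rfl⟩
      exact ⟨inv_pos.mpr (lt_trans zero_lt_one hx), inv_lt_one_of_one_lt₀ hx⟩
    · intro hy
      exact ⟨y⁻¹, (one_lt_inv₀ hy.1).mpr hy.2, inv_inv y⟩
  have key := integral_image_eq_integral_abs_deriv_smul (f' := fun x : ℝ => -(x^2)⁻¹)
    measurableSet_Ioi
    (fun x hx => (hasDerivAt_inv (lt_trans zero_lt_one hx).ne').hasDerivWithinAt)
    (Set.injOn_of_injective inv_injective)
    (fun t => Real.exp (-1/t) / t)
  rw [himg] at key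
  rw [key]
  refine setIntegral_congr_fun measurableSet_Ioi (fun x hx => ?_)
  have hx1 : (1:ℝ) < x := hx
  have hx0 : (0:ℝ) < x := lt_trans zero_lt_one hx1
  have : -1 / x⁻¹ = -x := by field_simp
  rw [smul_eq_mul, abs_neg, abs_inv, abs_of_nonneg (by positivity : (0:ℝ) ≤ x^2), this]
  field_simp

theorem integral_gamma_rep :
    ∫ t in Set.Ioo (0:ℝ) 1, (1 - Real.exp (-t) - Real.exp (-1/t)) / t
      = Real.eulerMascheroniConstant := by
  have int4' : IntegrableOn (fun t : ℝ => (1 - Real.exp (-t)) / t) (Set.Ioo 0 1) :=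
    int4.mono_set Set.Ioo_subset_Ioc_self
  have int5' : IntegrableOn (fun t : ℝ => Real.exp (-1/t) / t) (Set.Ioo 0 1) :=
    int5.mono_set Set.Ioo_subset_Ioc_self
  have hsplit : ∫ t in Set.Ioo (0:ℝ) 1, (1 - Real.exp (-t) - Real.exp (-1/t)) / t
      = (∫ t in Set.Ioo (0:ℝ) 1, (1 - Real.exp (-t)) / t)
        - ∫ t in Set.Ioo (0:ℝ) 1, Real.exp (-1/t) / t := by
    rw [← MeasureTheory.integral_sub int4' int5']
    refine setIntegral_congr_fun measurableSet_Ioo (fun t ht => ?_)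
    rw [← sub_div]
  have hunion : (∫ t in Set.Ioc (0:ℝ) 1, Real.log t * Real.exp (-t))
      + (∫ t in Set.Ioi (1:ℝ), Real.log t * Real.exp (-t))
      = ∫ t in Set.Ioi (0:ℝ), Real.log t * Real.exp (-t) := by
    rw [← MeasureTheory.setIntegral_union (Set.Ioc_disjoint_Ioi le_rfl) measurableSet_Ioi
      int1 int2, Set.Ioc_union_Ioi_eq_Ioi zero_le_one]
  rw [hsplit, parts1, subst, parts2, ← MeasureTheory.integral_Ioc_eq_integral_Ioo]
  have := gamma_eq
  linarith [hunion]
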